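/- Let X ~ USh(ω,η) with ω > 0, η > 0. Then E[X] = (ω/(ω+3η))·[ω/(1+ω) + 2η/(1+2ω) + 8ωη/(1+2ω)^2]. -/

import Mathlib

open Real

lemma continuousOn_log_mul_rpow {b : ℝ} (hb : 0 < b) :
    ContinuousOn (fun x : ℝ => Real.log x * x ^ b) (Set.Icc 0 1) := by
  intro x hx
  rcases eq_or_lt_of_le hx.1 with h0 | h0
  · subst h0
    rw [← continuousWithinAt_diff_self]
    have hsub : Set.Icc (0:ℝ) 1 \ {0} ⊆ Set.Ioi 0 := by
      intro y hy
      exact lt_of_le_of_ne hy.1.1 (Ne.symm (by simpa using hy.2))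
    have h := tendsto_log_mul_rpow_nhdsGT_zero hb
    have hval : Real.log 0 * (0:ℝ) ^ b = 0 := by
      simp [Real.zero_rpow hb.ne']
    unfold ContinuousWithinAt
    simpa [hval] using h.mono_left (nhdsWithin_mono _ hsub)
  · exact (((Real.continuousAt_log h0.ne').mul
      (Real.continuousAt_rpow_const x b (Or.inl h0.ne'))).continuousWithinAt)

lemma intervalIntegrable_log_mul_rpow {b : ℝ} (hb : 0 < b) :
    IntervalIntegrable (fun x : ℝ => Real.log x * x ^ b) MeasureTheory.volume 0 1 := by
  apply ContinuousOn.intervalIntegrable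
  rw [Set.uIcc_of_le zero_le_one]
  exact continuousOn_log_mul_rpow hb

lemma integral_log_mul_rpow {b : ℝ} (hb : 0 < b) :
    ∫ x in (0:ℝ)..1, Real.log x * x ^ b = -(1 / (b + 1) ^ 2) := by
  have hb1 : (0:ℝ) < b + 1 := by linarith
  set F : ℝ → ℝ := fun x => (x ^ (b+1) * ((b+1) * Real.log x - 1)) / (b+1)^2 with hF
  have key : ∫ x in (0:ℝ)..1, Real.log x * x ^ b = F 1 - F 0 := by
    apply intervalIntegral.integral_eq_sub_of_hasDeriv_right_of_le zero_le_one
    · -- continuity of F on [0,1]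
      have h1 : ContinuousOn (fun x : ℝ => Real.log x * x ^ (b+1)) (Set.Icc 0 1) :=
        continuousOn_log_mul_rpow hb1
      have h2 : ContinuousOn (fun x : ℝ => x ^ (b+1)) (Set.Icc 0 1) := fun x _ =>
        (Real.continuousAt_rpow_const x (b+1) (Or.inr hb1.le)).continuousWithinAt
      have : ContinuousOn
          (fun x : ℝ => ((b+1) * (Real.log x * x ^ (b+1)) - x ^ (b+1)) / (b+1)^2)
          (Set.Icc 0 1) := ((h1.const_smul (b+1)).sub h2).div_const _
      exact this.congr (fun x _ => by simp [hF]; ring)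
    · intro x hx
      have hx0 : 0 < x := hx.1
      have h1 : HasDerivAt (fun x : ℝ => x ^ (b+1)) ((b+1) * x ^ b) x := by
        have := Real.hasDerivAt_rpow_const (p := b+1) (Or.inl hx0.ne')
        simpa using this
      have h2 : HasDerivAt (fun x : ℝ => (b+1) * Real.log x - 1) ((b+1) * x⁻¹) x :=
        ((Real.hasDerivAt_log hx0.ne').const_mul (b+1)).sub_const 1
      have h3 := (h1.mul h2).div_const ((b+1)^2)
      have heq : ((b+1) * x ^ b * ((b+1) * Real.log x - 1) + x ^ (b+1) * ((b+1) * x⁻¹))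
          / (b+1)^2 = Real.log x * x ^ b := by
        rw [Real.rpow_add_one hx0.ne']
        field_simp
        ring
      rw [← heq]
      exact h3.hasDerivWithinAt
    · exact intervalIntegrable_log_mul_rpow hb
  rw [key]
  have hF1 : F 1 = -(1 / (b+1)^2) := by
    simp only [hF, Real.one_rpow, Real.log_one]
    field_simp
    ring
  have hF0 : F 0 = 0 := by
    simp [hF, Real.zero_rpow hb1.ne']
  rw [hF1, hF0]
  ring

theorem ush_mean (ω η : ℝ) (hω : 0 < ω) (hη : 0 < η) :
    ∫ x in (0:ℝ)..1, x *
      (ω / (ω + 3*η) * (ω * x ^ (ω-1) + (2*η - 8*ω*η*Real.log x) * x ^ (2*ω-1)))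
    = ω / (ω + 3*η) * (ω / (1 + ω) + 2*η / (1 + 2*ω) + 8*ω*η / (1 + 2*ω) ^ 2) := by
  set c : ℝ := ω / (ω + 3*η) with hc
  have h2ω : (0:ℝ) < 2*ω := by linarith
  have hωm : (-1:ℝ) < ω := by linarith
  have h2ωm : (-1:ℝ) < 2*ω := by linarith
  have hcongr : ∫ x in (0:ℝ)..1, x *
      (c * (ω * x ^ (ω-1) + (2*η - 8*ω*η*Real.log x) * x ^ (2*ω-1)))
      = ∫ x in (0:ℝ)..1,
        ((c * ω) * x ^ ω + (c * (2*η)) * x ^ (2*ω)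
          - (c * (8*ω*η)) * (Real.log x * x ^ (2*ω))) := by
    apply intervalIntegral.integral_congr
    intro x hx
    rw [Set.uIcc_of_le zero_le_one] at hx
    rcases eq_or_lt_of_le hx.1 with h0 | h0
    · subst h0
      simp [Real.zero_rpow hω.ne', Real.zero_rpow h2ω.ne']
    · have e1 : x * x ^ (ω-1) = x ^ ω := by
        calc x * x ^ (ω-1) = x ^ (1:ℝ) * x ^ (ω-1) := by rw [Real.rpow_one]
        _ = x ^ (1 + (ω-1)) := (Real.rpow_add h0 _ _).symm
        _ = x ^ ω := by ring_nf
      have e2 : x * x ^ (2*ω-1) = x ^ (2*ω) := by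
        calc x * x ^ (2*ω-1) = x ^ (1:ℝ) * x ^ (2*ω-1) := by rw [Real.rpow_one]
        _ = x ^ (1 + (2*ω-1)) := (Real.rpow_add h0 _ _).symm
        _ = x ^ (2*ω) := by ring_nf
      simp only []
      calc x * (c * (ω * x ^ (ω-1) + (2*η - 8*ω*η*Real.log x) * x ^ (2*ω-1)))
          = c * ω * (x * x ^ (ω-1)) + c * (2*η) * (x * x ^ (2*ω-1))
            - c * (8*ω*η) * (Real.log x * (x * x ^ (2*ω-1))) := by ring
        _ = _ := by rw [e1, e2]
  rw [hcongr]
  have i1 : IntervalIntegrable (fun x : ℝ => (c * ω) * x ^ ω) MeasureTheory.volume 0 1 :=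
    (intervalIntegral.intervalIntegrable_rpow' hωm).const_mul _
  have i2 : IntervalIntegrable (fun x : ℝ => (c * (2*η)) * x ^ (2*ω)) MeasureTheory.volume 0 1 :=
    (intervalIntegral.intervalIntegrable_rpow' h2ωm).const_mul _
  have i3 : IntervalIntegrable (fun x : ℝ => (c * (8*ω*η)) * (Real.log x * x ^ (2*ω)))
      MeasureTheory.volume 0 1 := (intervalIntegrable_log_mul_rpow h2ω).const_mul _
  rw [intervalIntegral.integral_sub (i1.add i2) i3, intervalIntegral.integral_add i1 i2,
    intervalIntegral.integral_const_mul, intervalIntegral.integral_const_mul,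
    intervalIntegral.integral_const_mul, integral_rpow (Or.inl hωm),
    integral_rpow (Or.inl h2ωm), integral_log_mul_rpow h2ω]
  have hω1 : ω + 1 ≠ 0 := by positivity
  have h2ω1 : 2*ω + 1 ≠ 0 := by positivity
  have h1ω : (1:ℝ) + ω ≠ 0 := by positivity
  have h12ω : (1:ℝ) + 2*ω ≠ 0 := by positivity
  rw [Real.one_rpow, Real.one_rpow, Real.zero_rpow (by positivity : ω + 1 ≠ 0),
    Real.zero_rpow (by positivity : 2*ω + 1 ≠ 0)]
  field_simp
  ring
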